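/- (1) If α <₂ β, then β is a limit multiple of ρ (β = ρ·λ for some limit ordinal λ) and the set {γ < α : γ <₁ α} is cofinal in α (for every γ' < α there is γ with γ' < γ < α and γ <₁ α). (2) If α <₂ β <₂ γ, then the set {δ < γ : α <₂ δ} is cofinal in γ. -/

import Mathlib

open Ordinal Set

/-- `ρ` is additively indecomposable: nonzero and closed under addition. -/
def AddIndec (ρ : Ordinal) : Prop :=
  ρ ≠ 0 ∧ ∀ ξ < ρ, ∀ η < ρ, ξ + η < ρ

/-- `σ` is divisible by `ρ`, i.e. of the form `ρ·ζ`. -/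
def DivBy (ρ σ : Ordinal) : Prop := ∃ ζ : Ordinal, σ = ρ * ζ

/-- The function `f_ξ` of the structure `R^ρ`. -/
noncomputable def fApp (ρ ξ α : Ordinal) : Ordinal :=
  if α % ρ = 0 then α + ξ else ρ * (α / ρ)

/-- A set of ordinals is closed (with respect to `R^ρ`). -/
def RClosed (ρ : Ordinal) (X : Set Ordinal) : Prop :=
  ∀ σ ξ : Ordinal, DivBy ρ σ → ξ < ρ → σ + ξ ∈ X → σ ∈ X

/-- `h` is an embedding of `X` (as a substructure of `R^ρ`) into `R^ρ`. -/
def IsEmbed (ρ : Ordinal) (X : Set Ordinal) (h : Ordinal → Ordinal) : Prop :=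
  (∀ α ∈ X, ∀ β ∈ X, α < β → h α < h β) ∧
  (∀ α ∈ X, ∀ β ∈ X, ∀ ξ, ξ < ρ → (fApp ρ ξ α = β ↔ fApp ρ ξ (h α) = h β))

/-- `Y` is a covering of `Z` (relative to relations `le1`, `le2`). -/
def IsCovering (ρ : Ordinal) (le1 le2 : Ordinal → Ordinal → Prop)
    (Z Y : Set Ordinal) : Prop :=
  ∃ h : Ordinal → Ordinal, IsEmbed ρ Z h ∧
    (∀ σ ∈ Z, ∀ τ ∈ Z, (le1 σ τ → le1 (h σ) (h τ)) ∧ (le2 σ τ → le2 (h σ) (h τ))) ∧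
    h '' Z = Y

/-- The `i`-th element of a finite set of ordinals, in increasing order. -/
noncomputable def nth (Y : Finset Ordinal) (i : ℕ) : Ordinal :=
  (Y.sort (· ≤ ·)).getD i 0

/-- There are cofinally many finite sets `Ỹ` below `α` with property `P`. -/
def Cofinally (α : Ordinal) (P : Finset Ordinal → Prop) : Prop :=
  ∀ α' < α, ∃ Yt : Finset Ordinal, (∀ y ∈ Yt, α' < y ∧ y < α) ∧ P Yt

/-- The defining condition for `α ≤₁ β`. -/
def Le1Def (ρ : Ordinal) (le1 le2 : Ordinal → Ordinal → Prop) (α β : Ordinal) : Prop :=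
  α ≤ β ∧
  ∀ X Y : Finset Ordinal, (∀ x ∈ X, x < α) → (∀ y ∈ Y, α ≤ y ∧ y < β) →
    RClosed ρ (↑(X ∪ Y) : Set Ordinal) →
    ∃ Yt : Finset Ordinal, (∀ y ∈ Yt, y < α) ∧ (∀ x ∈ X, ∀ y ∈ Yt, x < y) ∧
      IsCovering ρ le1 le2 (↑(X ∪ Y) : Set Ordinal) (↑(X ∪ Yt) : Set Ordinal)

/-- The defining condition for `α ≤₂ β`. -/
def Le2Def (ρ : Ordinal) (le1 le2 : Ordinal → Ordinal → Prop) (α β : Ordinal) : Prop :=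
  α ≤ β ∧
  (∀ X Y : Finset Ordinal, (∀ x ∈ X, x < α) → (∀ y ∈ Y, y < α) →
    RClosed ρ (↑X : Set Ordinal) → RClosed ρ (↑Y : Set Ordinal) →
    (∀ x ∈ X, ∀ y ∈ Y, x < y) →
    Cofinally α (fun Yt => IsCovering ρ le1 le2 (↑(X ∪ Y) : Set Ordinal) (↑(X ∪ Yt) : Set Ordinal)) →
    Cofinally β (fun Yt => IsCovering ρ le1 le2 (↑(X ∪ Y) : Set Ordinal) (↑(X ∪ Yt) : Set Ordinal))) ∧
  (∀ X Y : Finset Ordinal, (∀ x ∈ X, x < α) → (∀ y ∈ Y, α ≤ y ∧ y < β) →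
    RClosed ρ (↑(X ∪ Y) : Set Ordinal) →
    ∃ Yt : Finset Ordinal, (∀ y ∈ Yt, y < α) ∧ (∀ x ∈ X, ∀ y ∈ Yt, x < y) ∧
      IsCovering ρ le1 le2 (↑(X ∪ Y) : Set Ordinal) (↑(X ∪ Yt) : Set Ordinal) ∧
      ∀ i : ℕ, i < Y.card → le1 (nth Y i) β → le1 (nth Yt i) α)

/-- `le1`, `le2` satisfy the recursive definitions of `≤₁` and `≤₂` of `R₂^ρ`. -/
def R2System (ρ : Ordinal) (le1 le2 : Ordinal → Ordinal → Prop) : Prop :=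
  (∀ α β, le1 α β ↔ Le1Def ρ le1 le2 α β) ∧
  (∀ α β, le2 α β ↔ Le2Def ρ le1 le2 α β)

/-- Isomorphism of two classes of ordinals as substructures of `R₂^ρ`. -/
def OrdIso (ρ : Ordinal) (le1 le2 : Ordinal → Ordinal → Prop) (A B : Set Ordinal) : Prop :=
  ∃ g : Ordinal → Ordinal, Set.BijOn g A B ∧
    (∀ σ ∈ A, ∀ τ ∈ A, (σ < τ ↔ g σ < g τ)) ∧
    (∀ σ ∈ A, ∀ τ ∈ A, ∀ ξ, ξ < ρ → (fApp ρ ξ σ = τ ↔ fApp ρ ξ (g σ) = g τ)) ∧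
    (∀ σ ∈ A, ∀ τ ∈ A, (le1 σ τ ↔ le1 (g σ) (g τ)) ∧ (le2 σ τ ↔ le2 (g σ) (g τ)))

/-- `κ` is `≤₁`-minimal. -/
def Min1 (le1 : Ordinal → Ordinal → Prop) (κ : Ordinal) : Prop :=
  ∀ ξ < κ, ¬ le1 ξ κ

/-- `(dom, f)` is the increasing enumeration of the class `S` of ordinals:
`dom` is a downward-closed class of indices and `f` restricted to `dom` is the
order isomorphism onto `S`. -/
def Enumerates (S : Set Ordinal) (dom : Ordinal → Prop) (f : Ordinal → Ordinal) : Prop :=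
  (∀ a b : Ordinal, dom a → b < a → dom b) ∧
  (∀ a b : Ordinal, dom b → a < b → f a < f b) ∧
  (∀ a : Ordinal, dom a → f a ∈ S) ∧
  (∀ x ∈ S, ∃ a, dom a ∧ f a = x)

/-- `l` is a limit point of the class `C` of ordinals. -/
def LimPt (C : Set Ordinal) (l : Ordinal) : Prop :=
  l ≠ 0 ∧ ∀ γ < l, ∃ δ ∈ C, γ < δ ∧ δ < l

/-- The class `C` of ordinals is topologically closed. -/
def TopClosed (C : Set Ordinal) : Prop := ∀ l, LimPt C l → l ∈ C

/-- The class `C` of ordinals is an interval. -/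
def IsInterval (C : Set Ordinal) : Prop :=
  ∀ σ τ υ : Ordinal, σ ∈ C → υ ∈ C → σ ≤ τ → τ ≤ υ → τ ∈ C

open Classical in
/-- The closure `J̄_ξ` of the `ξ`-th component of `I_α` with respect to `≤₂`,
given the enumeration `(dom₂, ν)` of the `≤₂`-minimal multiples of `κ_α` in `I_α`. -/
noncomputable def Jbar (le1 : Ordinal → Ordinal → Prop) (κα : Ordinal)
    (dom₂ : Ordinal → Prop) (ν : Ordinal → Ordinal) (ξ : Ordinal) : Set Ordinal :=
  if dom₂ (ξ + 1) then Set.Icc (ν ξ) (ν (ξ + 1))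
  else {δ | le1 κα δ} ∩ Set.Ici (ν ξ)

section Helpers

open Ordinal

variable {ρ : Ordinal} {le1 le2 : Ordinal → Ordinal → Prop}

theorem hmod_hdiv (hρ : ρ ≠ 0) (ζ : Ordinal) {ξ : Ordinal} (hξ : ξ < ρ) :
    (ρ * ζ + ξ) % ρ = ξ ∧ (ρ * ζ + ξ) / ρ = ζ := by
  have hdiv : (ρ * ζ + ξ) / ρ = ζ := by
    rw [Ordinal.mul_add_div ζ hρ ξ, Ordinal.div_eq_zero_of_lt hξ, add_zero]
  exact ⟨by rw [Ordinal.mod_def, hdiv, Ordinal.add_sub_cancel], hdiv⟩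

theorem mul_mod_zero (hρ : ρ ≠ 0) (ζ : Ordinal) : (ρ * ζ) % ρ = 0 := by
  have := (hmod_hdiv hρ ζ (pos_iff_ne_zero.2 hρ)).1
  rwa [add_zero] at this

theorem self_div {x : Ordinal} (hx : x % ρ = 0) : ρ * (x / ρ) = x := by
  have := Ordinal.div_add_mod x ρ
  rwa [hx, add_zero] at this

theorem fApp_div {x : Ordinal} (hx : x % ρ = 0) (ξ : Ordinal) : fApp ρ ξ x = x + ξ := by
  rw [fApp, if_pos hx]

theorem fapp0 (hρ : ρ ≠ 0) {x : Ordinal} : fApp ρ 0 x = x ↔ x % ρ = 0 := by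
  constructor
  · intro h
    by_cases hx : x % ρ = 0
    · exact hx
    · rw [fApp, if_neg hx] at h
      rw [Ordinal.mod_def, h, Ordinal.sub_self]
  · intro hx
    rw [fApp_div hx, add_zero]

theorem add_lt_of_div (hρ : ρ ≠ 0) {a b ξ : Ordinal} (ha : a % ρ = 0) (hb : b % ρ = 0)
    (hab : a < b) (hξ : ξ < ρ) : a + ξ < b := by
  have hpos : (0 : Ordinal) < ρ := pos_iff_ne_zero.2 hρ
  have h1 : a / ρ < b / ρ := by
    refine (mul_lt_mul_iff_of_pos_left hpos).1 ?_
    rw [self_div ha, self_div hb]; exact hab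
  calc a + ξ < a + ρ := add_lt_add_right hξ a
    _ = ρ * (a / ρ) + ρ := by rw [self_div ha]
    _ = ρ * Order.succ (a / ρ) := (Ordinal.mul_succ ρ _).symm
    _ ≤ ρ * (b / ρ) := mul_le_mul_right (Order.succ_le_of_lt h1) ρ
    _ = b := self_div hb

theorem div_unique (hρ : ρ ≠ 0) {σ ξ : Ordinal} (hσ : σ % ρ = 0) (hξ : ξ < ρ) :
    ρ * ((σ + ξ) / ρ) = σ ∧ (σ + ξ) % ρ = ξ := by
  have e : σ + ξ = ρ * (σ / ρ) + ξ := by rw [self_div hσ]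
  rw [e]
  exact ⟨by rw [(hmod_hdiv hρ _ hξ).2, self_div hσ], (hmod_hdiv hρ _ hξ).1⟩

theorem rclosed_of (hρ : ρ ≠ 0) (s : Finset Ordinal)
    (h : ∀ a ∈ s, a % ρ = 0 ∨ ρ * (a / ρ) ∈ s) : RClosed ρ (↑s : Set Ordinal) := by
  intro σ ξ hdvd hξ hmem
  obtain ⟨ζ, rfl⟩ := hdvd
  have hσ : (ρ * ζ) % ρ = 0 := mul_mod_zero hρ ζ
  have h1 := div_unique hρ hσ hξ
  rcases h (ρ * ζ + ξ) hmem with h0 | h2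
  · have hξ0 : ξ = 0 := by rw [← h1.2, h0]
    subst hξ0
    rwa [add_zero] at hmem
  · rw [h1.1] at h2
    exact h2

theorem rclosed_empty : RClosed ρ (↑(∅ : Finset Ordinal) : Set Ordinal) := by
  intro σ ξ _ _ hmem
  simp at hmem

theorem rclosed_single (hρ : ρ ≠ 0) {x : Ordinal} (hx : x % ρ = 0) :
    RClosed ρ (↑({x} : Finset Ordinal) : Set Ordinal) :=
  rclosed_of hρ _ (fun z hz => by rw [Finset.mem_singleton] at hz; subst hz; exact Or.inl hx)

theorem le1_le (hsys : R2System ρ le1 le2) {a b : Ordinal} (h : le1 a b) : a ≤ b :=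
  ((hsys.1 a b).1 h).1

theorem le2_le (hsys : R2System ρ le1 le2) {a b : Ordinal} (h : le2 a b) : a ≤ b :=
  ((hsys.2 a b).1 h).1

theorem covering_id {Z : Set Ordinal} : IsCovering ρ le1 le2 Z Z :=
  ⟨id, ⟨fun _ _ _ _ h => h, fun _ _ _ _ _ _ => Iff.rfl⟩, fun _ _ _ _ => ⟨id, id⟩, Set.image_id Z⟩

theorem le1_refl (hsys : R2System ρ le1 le2) (a : Ordinal) : le1 a a := by
  refine (hsys.1 a a).2 ⟨le_refl a, ?_⟩
  intro X Y _ hY _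
  have hY0 : Y = ∅ := Finset.eq_empty_of_forall_notMem
    (fun y hy => ((hY y hy).2.not_ge (hY y hy).1))
  subst hY0
  exact ⟨∅, by simp, by simp, covering_id⟩

theorem le2_refl (hsys : R2System ρ le1 le2) (a : Ordinal) : le2 a a := by
  refine (hsys.2 a a).2 ⟨le_refl a, fun X Y _ _ _ _ _ h => h, ?_⟩
  intro X Y _ hY _
  have hY0 : Y = ∅ := Finset.eq_empty_of_forall_notMem
    (fun y hy => ((hY y hy).2.not_ge (hY y hy).1))
  subst hY0
  exact ⟨∅, by simp, by simp, covering_id, fun i hi => by simp at hi⟩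

theorem le2_le1 (hsys : R2System ρ le1 le2) {a b : Ordinal} (h : le2 a b) : le1 a b := by
  obtain ⟨hle, _, hii⟩ := (hsys.2 a b).1 h
  refine (hsys.1 a b).2 ⟨hle, ?_⟩
  intro X Y hX hY hcl
  obtain ⟨Yt, h1, h2, h3, _⟩ := hii X Y hX hY hcl
  exact ⟨Yt, h1, h2, h3⟩

end Helpers
section Helpers2

open Ordinal

variable {ρ : Ordinal} {le1 le2 : Ordinal → Ordinal → Prop}

theorem nth_singleton (x : Ordinal) : nth {x} 0 = x := by
  unfold nth
  rw [Finset.sort_singleton]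
  rfl

theorem ext_lemma {b : Ordinal} {X Yt : Finset Ordinal} {h : Ordinal → Ordinal}
    (hXb : ∀ x ∈ X, x < b)
    (hXYt : ∀ x ∈ X, ∀ y ∈ Yt, x < y)
    (hmono : ∀ u ∈ (↑(X ∪ {b}) : Set Ordinal), ∀ v ∈ (↑(X ∪ {b}) : Set Ordinal),
      u < v → h u < h v)
    (himg : h '' (↑(X ∪ {b}) : Set Ordinal) = (↑(X ∪ Yt) : Set Ordinal)) :
    ∃ c, Yt = {c} ∧ h b = c ∧ ∀ x₀ ∈ X, (∀ x ∈ X, x₀ ≤ x) → h x₀ = x₀ := by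
  classical
  have hbX : b ∉ X := fun hb => lt_irrefl b (hXb b hb)
  have hinj : Set.InjOn h (↑(X ∪ {b}) : Set Ordinal) := by
    intro u hu v hv huv
    by_contra hne
    rcases lt_or_gt_of_ne hne with h1 | h1
    · exact (ne_of_lt (hmono u hu v hv h1)) huv
    · exact (ne_of_lt (hmono v hv u hu h1)) huv.symm
  have himgF : (X ∪ {b}).image h = X ∪ Yt := by
    apply Finset.coe_injective
    rw [Finset.coe_image]
    exact himg
  have hdisj1 : Disjoint X ({b} : Finset Ordinal) :=
    Finset.disjoint_singleton_right.2 hbX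
  have hdisj2 : Disjoint X Yt :=
    Finset.disjoint_left.mpr (fun x hx hxY => lt_irrefl x (hXYt x hx x hxY))
  have hc1 : ((X ∪ {b}).image h).card = X.card + 1 := by
    rw [Finset.card_image_of_injOn hinj, Finset.card_union_of_disjoint hdisj1,
      Finset.card_singleton]
  have hc2 : (X ∪ Yt).card = X.card + Yt.card := Finset.card_union_of_disjoint hdisj2
  have hc3 : Yt.card = 1 := by
    rw [himgF] at hc1
    omega
  obtain ⟨c, rfl⟩ := Finset.card_eq_one.mp hc3
  have hcmem : c ∈ (↑(X ∪ ({c} : Finset Ordinal)) : Set Ordinal) := by simp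
  rw [← himg] at hcmem
  obtain ⟨z, hz, hzc⟩ := hcmem
  have hbmem : b ∈ (↑(X ∪ ({b} : Finset Ordinal)) : Set Ordinal) := by simp
  have hbc : h b = c := by
    have hz' : z ∈ X ∪ ({b} : Finset Ordinal) := hz
    rcases Finset.mem_union.1 hz' with hzX | hzb
    · exfalso
      have hchb : c < h b := by
        rw [← hzc]
        exact hmono z hz b hbmem (hXb z hzX)
      have : h b ∈ (↑(X ∪ ({c} : Finset Ordinal)) : Set Ordinal) := by
        rw [← himg]; exact Set.mem_image_of_mem h hbmem
      have : h b ∈ X ∪ ({c} : Finset Ordinal) := this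
      rcases Finset.mem_union.1 this with hX' | hc'
      · exact lt_irrefl _ (hchb.trans (hXYt (h b) hX' c (Finset.mem_singleton_self c)))
      · rw [Finset.mem_singleton] at hc'
        rw [hc'] at hchb
        exact lt_irrefl c hchb
    · rw [Finset.mem_singleton] at hzb
      rw [← hzb]; exact hzc
  refine ⟨c, rfl, hbc, ?_⟩
  intro x₀ hx₀ hminX
  have hx₀mem : x₀ ∈ (↑(X ∪ ({b} : Finset Ordinal)) : Set Ordinal) := by simp [hx₀]
  have hx₀img : x₀ ∈ (↑(X ∪ ({c} : Finset Ordinal)) : Set Ordinal) := by simp [hx₀]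
  rw [← himg] at hx₀img
  obtain ⟨w, hw, hwx₀⟩ := hx₀img
  by_cases hwe : w = x₀
  · rwa [hwe] at hwx₀
  · exfalso
    have hw' : w ∈ X ∪ ({b} : Finset Ordinal) := hw
    have hx₀w : x₀ < w := by
      rcases Finset.mem_union.1 hw' with hwX | hwb
      · exact lt_of_le_of_ne (hminX w hwX) (fun e => hwe e.symm)
      · rw [Finset.mem_singleton] at hwb
        rw [hwb]; exact hXb x₀ hx₀
    have h1 : h x₀ < x₀ := lt_of_lt_of_eq (hmono x₀ hx₀mem w hw hx₀w) hwx₀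
    have h2 : h x₀ ∈ X ∪ ({c} : Finset Ordinal) := by
      have : h x₀ ∈ (↑(X ∪ ({c} : Finset Ordinal)) : Set Ordinal) := by
        rw [← himg]; exact Set.mem_image_of_mem h hx₀mem
      exact this
    rcases Finset.mem_union.1 h2 with hX' | hc'
    · exact absurd (hminX _ hX') (not_le.mpr h1)
    · rw [Finset.mem_singleton] at hc'
      rw [hc'] at h1
      exact absurd (hXYt x₀ hx₀ c (Finset.mem_singleton_self c)).le (not_le.mpr h1)

theorem key (hsys : R2System ρ le1 le2) {a b t : Ordinal} (hab : le2 a b)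
    (X : Finset Ordinal) (hX : ∀ x ∈ X, x < a) (hta : a ≤ t) (htb : t < b)
    (hcl : RClosed ρ (↑(X ∪ ({t} : Finset Ordinal)) : Set Ordinal)) :
    ∃ (c : Ordinal) (h : Ordinal → Ordinal),
      c < a ∧ (∀ x ∈ X, x < c) ∧ h t = c ∧
      (∀ x₀ ∈ X, (∀ x ∈ X, x₀ ≤ x) → h x₀ = x₀) ∧
      IsEmbed ρ (↑(X ∪ ({t} : Finset Ordinal)) : Set Ordinal) h ∧
      (∀ σ ∈ (↑(X ∪ ({t} : Finset Ordinal)) : Set Ordinal),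
        ∀ τ ∈ (↑(X ∪ ({t} : Finset Ordinal)) : Set Ordinal),
        (le1 σ τ → le1 (h σ) (h τ)) ∧ (le2 σ τ → le2 (h σ) (h τ))) ∧
      (le1 t b → le1 c a) := by
  obtain ⟨_, _, hii⟩ := (hsys.2 a b).1 hab
  obtain ⟨Yt, hYta, hXYt, hcov, hnth⟩ := hii X {t} hX
    (fun y hy => by rw [Finset.mem_singleton] at hy; subst hy; exact ⟨hta, htb⟩) hcl
  obtain ⟨h, hemb, hpres, himg⟩ := hcov
  obtain ⟨c, hYt, hht, hmin⟩ := ext_lemma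
    (fun x hx => lt_of_lt_of_le (hX x hx) hta) hXYt hemb.1 himg
  have hcY : c ∈ Yt := by rw [hYt]; exact Finset.mem_singleton_self c
  refine ⟨c, h, hYta c hcY, fun x hx => hXYt x hx c hcY, hht, hmin, hemb, hpres, ?_⟩
  intro h1
  have h2 := hnth 0 (by simp) (by rwa [nth_singleton])
  rwa [hYt, nth_singleton] at h2

end Helpers2
section Helpers3

open Ordinal

variable {ρ : Ordinal} {le1 le2 : Ordinal → Ordinal → Prop}

theorem cov_zero (hsys : R2System ρ le1 le2) (hρ : ρ ≠ 0) {y : Ordinal} (hy : y % ρ = 0) :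
    IsCovering ρ le1 le2 (↑((∅ : Finset Ordinal) ∪ {0}) : Set Ordinal)
      (↑((∅ : Finset Ordinal) ∪ ({y} : Finset Ordinal)) : Set Ordinal) := by
  refine ⟨fun _ => y, ⟨?_, ?_⟩, ?_, ?_⟩
  · intro u hu v hv huv
    simp at hu hv
    rw [hu, hv] at huv
    exact absurd huv (lt_irrefl 0)
  · intro u hu v hv ξ hξ
    simp at hu hv
    subst hu; subst hv
    rw [fApp_div (Ordinal.zero_mod ρ), fApp_div hy]
    constructor
    · intro h0
      rw [zero_add] at h0
      rw [h0, add_zero]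
    · intro h0
      have : y + ξ = y + 0 := by rwa [add_zero]
      rw [(add_right_inj y).1 this, zero_add]
  · intro u hu v hv
    exact ⟨fun _ => le1_refl hsys y, fun _ => le2_refl hsys y⟩
  · simp

theorem cov_pair (hsys : R2System ρ le1 le2) (hρ : ρ ≠ 0) {a y₀ δ : Ordinal}
    (ha : a % ρ = 0) (hy₀ : y₀ % ρ = 0) (hδ : δ % ρ = 0)
    (hay : a < y₀) (haδ : a < δ) (h2 : le2 a δ) :
    IsCovering ρ le1 le2 (↑(({a} : Finset Ordinal) ∪ {y₀}) : Set Ordinal)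
      (↑(({a} : Finset Ordinal) ∪ ({δ} : Finset Ordinal)) : Set Ordinal) := by
  classical
  have hne_ay : a ≠ y₀ := hay.ne
  refine ⟨fun t => if t = y₀ then δ else t, ⟨?_, ?_⟩, ?_, ?_⟩
  · intro u hu v hv huv
    rw [Finset.coe_union, Finset.coe_singleton, Finset.coe_singleton] at hu hv
    rcases hu with hu | hu <;> rcases hv with hv | hv <;>
      rw [Set.mem_singleton_iff] at hu hv <;> rw [hu, hv] at huv ⊢
    · exact absurd huv (lt_irrefl _)
    · show (if a = y₀ then δ else a) < (if y₀ = y₀ then δ else y₀)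
      rw [if_neg hne_ay, if_pos rfl]
      exact haδ
    · exact absurd huv (asymm hay)
    · exact absurd huv (lt_irrefl _)
  · intro u hu v hv ξ hξ
    rw [Finset.coe_union, Finset.coe_singleton, Finset.coe_singleton] at hu hv
    rcases hu with hu | hu <;> rcases hv with hv | hv <;>
      rw [Set.mem_singleton_iff] at hu hv <;> rw [hu, hv]
    · show fApp ρ ξ a = a ↔ fApp ρ ξ (if a = y₀ then δ else a) = (if a = y₀ then δ else a)
      rw [if_neg hne_ay]
    · show fApp ρ ξ a = y₀ ↔
        fApp ρ ξ (if a = y₀ then δ else a) = (if y₀ = y₀ then δ else y₀)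
      rw [if_neg hne_ay, if_pos rfl, fApp_div ha]
      exact iff_of_false (ne_of_lt (add_lt_of_div hρ ha hy₀ hay hξ))
        (ne_of_lt (add_lt_of_div hρ ha hδ haδ hξ))
    · show fApp ρ ξ y₀ = a ↔
        fApp ρ ξ (if y₀ = y₀ then δ else y₀) = (if a = y₀ then δ else a)
      rw [if_neg hne_ay, if_pos rfl, fApp_div hy₀, fApp_div hδ]
      exact iff_of_false (ne_of_gt (lt_of_lt_of_le hay (le_self_add)))
        (ne_of_gt (lt_of_lt_of_le haδ (le_self_add)))
    · show fApp ρ ξ y₀ = y₀ ↔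
        fApp ρ ξ (if y₀ = y₀ then δ else y₀) = (if y₀ = y₀ then δ else y₀)
      rw [if_pos rfl, fApp_div hy₀, fApp_div hδ]
      constructor
      · intro h0
        have h1 : y₀ + ξ = y₀ + 0 := by rwa [add_zero]
        rw [(add_right_inj y₀).1 h1, add_zero]
      · intro h0
        have h1 : δ + ξ = δ + 0 := by rwa [add_zero]
        rw [(add_right_inj δ).1 h1, add_zero]
  · intro u hu v hv
    rw [Finset.coe_union, Finset.coe_singleton, Finset.coe_singleton] at hu hv
    rcases hu with hu | hu <;> rcases hv with hv | hv <;>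
      rw [Set.mem_singleton_iff] at hu hv <;> rw [hu, hv]
    · show (le1 a a → le1 (if a = y₀ then δ else a) (if a = y₀ then δ else a)) ∧
        (le2 a a → le2 (if a = y₀ then δ else a) (if a = y₀ then δ else a))
      rw [if_neg hne_ay]
      exact ⟨id, id⟩
    · show (le1 a y₀ → le1 (if a = y₀ then δ else a) (if y₀ = y₀ then δ else y₀)) ∧
        (le2 a y₀ → le2 (if a = y₀ then δ else a) (if y₀ = y₀ then δ else y₀))
      rw [if_neg hne_ay, if_pos rfl]
      exact ⟨fun _ => le2_le1 hsys h2, fun _ => h2⟩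
    · exact ⟨fun hl => absurd (le1_le hsys hl) (not_le.mpr hay),
        fun hl => absurd (le2_le hsys hl) (not_le.mpr hay)⟩
    · show (le1 y₀ y₀ → le1 (if y₀ = y₀ then δ else y₀) (if y₀ = y₀ then δ else y₀)) ∧
        (le2 y₀ y₀ → le2 (if y₀ = y₀ then δ else y₀) (if y₀ = y₀ then δ else y₀))
      rw [if_pos rfl]
      exact ⟨fun _ => le1_refl hsys δ, fun _ => le2_refl hsys δ⟩
  · have h1 : (↑(({a} : Finset Ordinal) ∪ {y₀}) : Set Ordinal) = {a, y₀} := by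
      rw [Finset.coe_union, Finset.coe_singleton, Finset.coe_singleton, Set.singleton_union]
    have h2' : (↑(({a} : Finset Ordinal) ∪ ({δ} : Finset Ordinal)) : Set Ordinal) = {a, δ} := by
      rw [Finset.coe_union, Finset.coe_singleton, Finset.coe_singleton, Set.singleton_union]
    rw [h1, h2', Set.image_pair]
    show ({if a = y₀ then δ else a, if y₀ = y₀ then δ else y₀} : Set Ordinal) = {a, δ}
    rw [if_neg hne_ay, if_pos rfl]

theorem cof_of_limit (hρ : ρ ≠ 0) {b : Ordinal} (hb : b % ρ = 0) (hl : Order.IsSuccLimit (b / ρ)) :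
    ∀ b' < b, ∃ y, b' < y ∧ y < b ∧ y % ρ = 0 := by
  intro b' hb'
  have hpos : (0 : Ordinal) < ρ := pos_iff_ne_zero.2 hρ
  refine ⟨ρ * (b' / ρ + 1), ?_, ?_, mul_mod_zero hρ _⟩
  · calc b' < ρ * (b' / ρ) + ρ := Ordinal.lt_mul_div_add b' hρ
      _ = ρ * (b' / ρ + 1) := by rw [Ordinal.add_one_eq_succ, Ordinal.mul_succ]
  · have h1 : b' / ρ < b / ρ := by
      by_contra hge
      push_neg at hge
      have : b ≤ b' := by
        calc b = ρ * (b / ρ) := (self_div hb).symm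
          _ ≤ ρ * (b' / ρ) := mul_le_mul_right hge ρ
          _ ≤ b' := Ordinal.mul_div_le b' ρ
      exact absurd hb' (not_lt.mpr this)
    have h2 : b' / ρ + 1 < b / ρ := by
      rw [Ordinal.add_one_eq_succ]
      exact hl.succ_lt h1
    calc ρ * (b' / ρ + 1) < ρ * (b / ρ) := (mul_lt_mul_iff_of_pos_left hpos).2 h2
      _ = b := self_div hb

theorem limit_of_cof (hρ : ρ ≠ 0) {b : Ordinal} (hb0 : b ≠ 0)
    (hcof : ∀ b' < b, ∃ y, b' < y ∧ y < b ∧ y % ρ = 0) :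
    b % ρ = 0 ∧ Order.IsSuccLimit (b / ρ) := by
  have hpos : (0 : Ordinal) < ρ := pos_iff_ne_zero.2 hρ
  have hbmod : b % ρ = 0 := by
    by_contra hm
    have hlt : ρ * (b / ρ) < b := lt_of_le_of_ne (Ordinal.mul_div_le b ρ)
      (fun he => hm (by rw [Ordinal.mod_def, he, Ordinal.sub_self]))
    obtain ⟨y, h1, h2, h3⟩ := hcof _ hlt
    have h4 : b / ρ < y / ρ := (mul_lt_mul_iff_of_pos_left hpos).1 (by rw [self_div h3]; exact h1)
    have h5 : ρ * (b / ρ) + ρ ≤ y := by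
      calc ρ * (b / ρ) + ρ = ρ * Order.succ (b / ρ) := (Ordinal.mul_succ ρ _).symm
        _ ≤ ρ * (y / ρ) := mul_le_mul_right (Order.succ_le_of_lt h4) ρ
        _ = y := self_div h3
    have h6 : b < y := by
      calc b = ρ * (b / ρ) + b % ρ := (Ordinal.div_add_mod b ρ).symm
        _ < ρ * (b / ρ) + ρ := add_lt_add_right (Ordinal.mod_lt b hρ) _
        _ ≤ y := h5
    exact absurd h2 (not_lt.mpr h6.le)
  refine ⟨hbmod, ?_⟩
  have hd0 : b / ρ ≠ 0 := fun h => hb0 (by rw [← self_div hbmod, h, mul_zero])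
  rcases Ordinal.zero_or_succ_or_isSuccLimit (b / ρ) with h | ⟨η, hη⟩ | h
  · exact absurd h hd0
  · exfalso
    have hbe : b = ρ * η + ρ := by rw [← self_div hbmod, ← hη, Ordinal.mul_succ]
    have hlt : ρ * η < b := by
      rw [hbe]
      calc ρ * η = ρ * η + 0 := (add_zero _).symm
        _ < ρ * η + ρ := add_lt_add_right hpos _
    obtain ⟨y, h1, h2, h3⟩ := hcof _ hlt
    have h4 : η < y / ρ := (mul_lt_mul_iff_of_pos_left hpos).1 (by rw [self_div h3]; exact h1)
    have h5 : b ≤ y := by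
      calc b = ρ * Order.succ η := by rw [← self_div hbmod, ← hη]
        _ ≤ ρ * (y / ρ) := mul_le_mul_right (Order.succ_le_of_lt h4) ρ
        _ = y := self_div h3
    exact absurd h2 (not_lt.mpr h5)
  · exact h

theorem src_facts (hsys : R2System ρ le1 le2) (hρ : ρ ≠ 0) {a b : Ordinal}
    (hab : le2 a b) (hne : a ≠ b) : a % ρ = 0 ∧ a ≠ 0 ∧ Order.IsSuccLimit (a / ρ) := by
  have hpos : (0 : Ordinal) < ρ := pos_iff_ne_zero.2 hρ
  have hlt : a < b := lt_of_le_of_ne (le2_le hsys hab) hne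
  have ha0 : a ≠ 0 := by
    rintro rfl
    obtain ⟨c, h, hc, -⟩ := key hsys hab ∅ (by simp) (le_refl 0) hlt
      (by
        have : (↑((∅ : Finset Ordinal) ∪ ({0} : Finset Ordinal)) : Set Ordinal)
            = ↑({0} : Finset Ordinal) := by simp
        rw [this]
        exact rclosed_single hρ (Ordinal.zero_mod ρ))
    exact not_lt_zero hc
  have hamod : a % ρ = 0 := by
    by_contra hm
    have hXlt : ρ * (a / ρ) < a := lt_of_le_of_ne (Ordinal.mul_div_le a ρ)
      (fun he => hm (by rw [Ordinal.mod_def, he, Ordinal.sub_self]))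
    obtain ⟨c, h, hca, hXc, hht, hmin, hemb, -, -⟩ := key hsys hab {ρ * (a / ρ)}
      (by intro x hx; rw [Finset.mem_singleton] at hx; subst hx; exact hXlt)
      (le_refl a) hlt
      (rclosed_of hρ _ (by
        intro z hz
        rcases Finset.mem_union.1 hz with hz1 | hz2
        · rw [Finset.mem_singleton] at hz1; subst hz1
          exact Or.inl (mul_mod_zero hρ _)
        · rw [Finset.mem_singleton] at hz2; subst hz2
          exact Or.inr (Finset.mem_union_left _ (Finset.mem_singleton_self _))))
    have hmm : h (ρ * (a / ρ)) = ρ * (a / ρ) := hmin _ (Finset.mem_singleton_self _)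
      (fun x hx => by rw [Finset.mem_singleton] at hx; subst hx; exact le_refl _)
    have hmem1 : ρ * (a / ρ) ∈ (↑(({ρ * (a / ρ)} : Finset Ordinal) ∪ {a}) : Set Ordinal) := by
      simp
    have hmem2 : a ∈ (↑(({ρ * (a / ρ)} : Finset Ordinal) ∪ {a}) : Set Ordinal) := by simp
    have hiff := hemb.2 _ hmem1 _ hmem2 (a % ρ) (Ordinal.mod_lt a hρ)
    rw [hmm, hht] at hiff
    have hL : fApp ρ (a % ρ) (ρ * (a / ρ)) = a := by
      rw [fApp_div (mul_mod_zero hρ _)]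
      exact Ordinal.div_add_mod a ρ
    have hR := hiff.1 hL
    rw [hL] at hR
    exact absurd hR (ne_of_gt hca)
  refine ⟨hamod, ha0, ?_⟩
  have hd0 : a / ρ ≠ 0 := fun h => ha0 (by rw [← self_div hamod, h, mul_zero])
  rcases Ordinal.zero_or_succ_or_isSuccLimit (a / ρ) with h | ⟨η, hη⟩ | h
  · exact absurd h hd0
  · exfalso
    have hae : a = ρ * η + ρ := by rw [← self_div hamod, ← hη, Ordinal.mul_succ]
    have hXlt : ρ * η < a := by
      rw [hae]
      calc ρ * η = ρ * η + 0 := (add_zero _).symm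
        _ < ρ * η + ρ := add_lt_add_right hpos _
    obtain ⟨c, h, hca, hXc, hht, hmin, hemb, -, -⟩ := key hsys hab {ρ * η}
      (by intro x hx; rw [Finset.mem_singleton] at hx; subst hx; exact hXlt)
      (le_refl a) hlt
      (rclosed_of hρ _ (by
        intro z hz
        rcases Finset.mem_union.1 hz with hz1 | hz2
        · rw [Finset.mem_singleton] at hz1; subst hz1
          exact Or.inl (mul_mod_zero hρ _)
        · rw [Finset.mem_singleton] at hz2; subst hz2
          exact Or.inl hamod))
    have hmm : h (ρ * η) = ρ * η := hmin _ (Finset.mem_singleton_self _)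
      (fun x hx => by rw [Finset.mem_singleton] at hx; subst hx; exact le_refl _)
    have hηc : ρ * η < c := hXc _ (Finset.mem_singleton_self _)
    have hce : ρ * η + (c - ρ * η) = c := Ordinal.add_sub_cancel_of_le hηc.le
    have heξ : c - ρ * η < ρ := by
      have : ρ * η + (c - ρ * η) < ρ * η + ρ := by rw [hce, ← hae]; exact hca
      exact (add_lt_add_iff_left (ρ * η)).1 this
    have hmem1 : ρ * η ∈ (↑(({ρ * η} : Finset Ordinal) ∪ {a}) : Set Ordinal) := by simp
    have hmem2 : a ∈ (↑(({ρ * η} : Finset Ordinal) ∪ {a}) : Set Ordinal) := by simp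
    have hiff := hemb.2 _ hmem1 _ hmem2 (c - ρ * η) heξ
    rw [hmm, hht] at hiff
    have hR : fApp ρ (c - ρ * η) (ρ * η) = c := by
      rw [fApp_div (mul_mod_zero hρ _)]
      exact hce
    have hL := hiff.2 hR
    rw [hR] at hL
    exact absurd hL (ne_of_lt hca)
  · exact h

end Helpers3
section Helpers4

open Ordinal

variable {ρ : Ordinal} {le1 le2 : Ordinal → Ordinal → Prop}

theorem tgt_facts (hsys : R2System ρ le1 le2) (hρ : ρ ≠ 0) {a b : Ordinal}
    (hab : le2 a b) (hne : a ≠ b) : b % ρ = 0 ∧ Order.IsSuccLimit (b / ρ) := by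
  obtain ⟨hamod, ha0, halim⟩ := src_facts hsys hρ hab hne
  have hlt : a < b := lt_of_le_of_ne (le2_le hsys hab) hne
  have hpos : (0 : Ordinal) < ρ := pos_iff_ne_zero.2 hρ
  have hapos : (0 : Ordinal) < a := pos_iff_ne_zero.2 ha0
  obtain ⟨-, hi, -⟩ := (hsys.2 a b).1 hab
  have hcofa : Cofinally a (fun Yt => IsCovering ρ le1 le2
      (↑((∅ : Finset Ordinal) ∪ ({0} : Finset Ordinal)) : Set Ordinal)
      (↑((∅ : Finset Ordinal) ∪ Yt) : Set Ordinal)) := by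
    intro a' ha'
    obtain ⟨y, h1, h2, h3⟩ := cof_of_limit hρ hamod halim a' ha'
    exact ⟨{y}, fun z hz => by rw [Finset.mem_singleton] at hz; subst hz; exact ⟨h1, h2⟩,
      cov_zero hsys hρ h3⟩
  have hcofb := hi ∅ {0} (by simp)
    (fun y hy => by rw [Finset.mem_singleton] at hy; subst hy; exact hapos)
    rclosed_empty (rclosed_single hρ (Ordinal.zero_mod ρ)) (by simp) hcofa
  have hcof : ∀ b' < b, ∃ y, b' < y ∧ y < b ∧ y % ρ = 0 := by
    intro b' hb'
    obtain ⟨Yt, hYt, hcov⟩ := hcofb b' hb'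
    obtain ⟨h, hemb, -, himg⟩ := hcov
    have h0mem : (0 : Ordinal) ∈
        (↑((∅ : Finset Ordinal) ∪ ({0} : Finset Ordinal)) : Set Ordinal) := by simp
    have h0img : h 0 ∈ (↑((∅ : Finset Ordinal) ∪ Yt) : Set Ordinal) := by
      rw [← himg]; exact Set.mem_image_of_mem h h0mem
    have hy : h 0 ∈ Yt := by
      rw [Finset.empty_union] at h0img; exact h0img
    refine ⟨h 0, (hYt _ hy).1, (hYt _ hy).2, ?_⟩
    have hiff := hemb.2 0 h0mem 0 h0mem 0 hpos
    have hL : fApp ρ 0 0 = 0 := by rw [fApp_div (Ordinal.zero_mod ρ), add_zero]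
    exact (fapp0 hρ).1 (hiff.1 hL)
  exact limit_of_cof hρ (fun h0 => by rw [h0] at hlt; exact not_lt_zero hlt) hcof

theorem part1b (hsys : R2System ρ le1 le2) (hρ : ρ ≠ 0) {a b : Ordinal}
    (hab : le2 a b) (hne : a ≠ b) :
    ∀ g < a, ∃ y, g < y ∧ y < a ∧ le1 y a := by
  intro g hg
  obtain ⟨hamod, -, -⟩ := src_facts hsys hρ hab hne
  have hlt : a < b := lt_of_le_of_ne (le2_le hsys hab) hne
  obtain ⟨c, h, hca, hXc, -, -, -, -, hle1⟩ := key hsys hab {ρ * (g / ρ), g}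
    (by
      intro x hx
      rcases Finset.mem_insert.1 hx with rfl | hx
      · exact lt_of_le_of_lt (Ordinal.mul_div_le g ρ) hg
      · rw [Finset.mem_singleton] at hx; subst hx; exact hg)
    (le_refl a) hlt
    (rclosed_of hρ _ (by
      intro z hz
      rcases Finset.mem_union.1 hz with hz1 | hz2
      · rcases Finset.mem_insert.1 hz1 with rfl | hz1
        · exact Or.inl (mul_mod_zero hρ _)
        · rw [Finset.mem_singleton] at hz1; subst hz1
          exact Or.inr (Finset.mem_union_left _ (Finset.mem_insert_self _ _))
      · rw [Finset.mem_singleton] at hz2; subst hz2; exact Or.inl hamod))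
  exact ⟨c, hXc g (by simp), hca, hle1 (le2_le1 hsys hab)⟩

theorem part2 (hsys : R2System ρ le1 le2) (hρ : ρ ≠ 0) {a b c : Ordinal}
    (hab : le2 a b) (hne1 : a ≠ b) (hbc : le2 b c) (hne2 : b ≠ c) :
    ∀ g < c, ∃ δ, g < δ ∧ δ < c ∧ le2 a δ ∧ a ≠ δ := by
  have hpos : (0 : Ordinal) < ρ := pos_iff_ne_zero.2 hρ
  have hltab : a < b := lt_of_le_of_ne (le2_le hsys hab) hne1
  have hltbc : b < c := lt_of_le_of_ne (le2_le hsys hbc) hne2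
  obtain ⟨hamod, -, -⟩ := src_facts hsys hρ hab hne1
  obtain ⟨hbmod, -, hblim⟩ := src_facts hsys hρ hbc hne2
  have hcofmb := cof_of_limit hρ hbmod hblim
  have stepA : ∀ x, a < x → x < b → x % ρ = 0 →
      ∃ δ, x < δ ∧ δ < b ∧ δ % ρ = 0 ∧ le2 a δ := by
    intro x hax hxb hxm
    obtain ⟨d, h, hdb, hXd, hhb, hmin, hemb, hpres, -⟩ := key hsys hbc {a, x}
      (by
        intro z hz
        rcases Finset.mem_insert.1 hz with rfl | hz
        · exact hltab
        · rw [Finset.mem_singleton] at hz; subst hz; exact hxb)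
      (le_refl b) hltbc
      (rclosed_of hρ _ (by
        intro z hz
        rcases Finset.mem_union.1 hz with hz1 | hz2
        · rcases Finset.mem_insert.1 hz1 with rfl | hz1
          · exact Or.inl hamod
          · rw [Finset.mem_singleton] at hz1; subst hz1; exact Or.inl hxm
        · rw [Finset.mem_singleton] at hz2; subst hz2; exact Or.inl hbmod))
    have hha : h a = a := hmin a (by simp)
      (by
        intro z hz
        rcases Finset.mem_insert.1 hz with hz | hz
        · rw [hz]
        · rw [Finset.mem_singleton] at hz; rw [hz]; exact hax.le)
    have hamem : a ∈ (↑(({a, x} : Finset Ordinal) ∪ {b}) : Set Ordinal) := by simp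
    have hbmem : b ∈ (↑(({a, x} : Finset Ordinal) ∪ {b}) : Set Ordinal) := by simp
    have h2 : le2 a d := by
      have h3 := (hpres a hamem b hbmem).2 hab
      rwa [hha, hhb] at h3
    have hdm : d % ρ = 0 := by
      have hiff := hemb.2 b hbmem b hbmem 0 hpos
      rw [hhb] at hiff
      exact (fapp0 hρ).1 (hiff.1 (by rw [fApp_div hbmod, add_zero]))
    exact ⟨d, hXd x (by simp), hdb, hdm, h2⟩
  obtain ⟨x₁, hax₁, hx₁b, hx₁m⟩ := hcofmb a hltab
  obtain ⟨y₀, hx₁y₀, hy₀b, hy₀m, hay₀2⟩ := stepA x₁ hax₁ hx₁b hx₁m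
  have hay₀ : a < y₀ := hax₁.trans hx₁y₀
  obtain ⟨-, hi, -⟩ := (hsys.2 b c).1 hbc
  have hcofb2 : Cofinally b (fun Yt => IsCovering ρ le1 le2
      (↑(({a} : Finset Ordinal) ∪ ({y₀} : Finset Ordinal)) : Set Ordinal)
      (↑(({a} : Finset Ordinal) ∪ Yt) : Set Ordinal)) := by
    intro b' hb'
    obtain ⟨x₂, hx₂1, hx₂b, hx₂m⟩ := hcofmb (max b' a) (max_lt hb' hltab)
    have hax₂ : a < x₂ := (le_max_right b' a).trans_lt hx₂1
    obtain ⟨δ, hδ1, hδb, hδm, hδ2⟩ := stepA x₂ hax₂ hx₂b hx₂m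
    refine ⟨{δ}, ?_, cov_pair hsys hρ hamod hy₀m hδm hay₀ (hax₂.trans hδ1) hδ2⟩
    intro z hz
    rw [Finset.mem_singleton] at hz
    subst hz
    exact ⟨(le_max_left b' a).trans_lt (hx₂1.trans hδ1), hδb⟩
  have hcofc := hi {a} {y₀}
    (fun x hx => by rw [Finset.mem_singleton] at hx; subst hx; exact hltab)
    (fun y hy => by rw [Finset.mem_singleton] at hy; subst hy; exact hy₀b)
    (rclosed_single hρ hamod) (rclosed_single hρ hy₀m)
    (fun x hx y hy => by
      rw [Finset.mem_singleton] at hx hy; subst hx; subst hy; exact hay₀)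
    hcofb2
  intro g hg
  have hmaxlt : max g a < c := max_lt hg (hltab.trans hltbc)
  obtain ⟨Yt, hYt, hcov⟩ := hcofc (max g a) hmaxlt
  obtain ⟨h, hemb, hpres, himg⟩ := hcov
  obtain ⟨δ, hYtδ, hhy₀, hmin⟩ := ext_lemma (X := {a}) (b := y₀)
    (fun z hz => by rw [Finset.mem_singleton] at hz; rw [hz]; exact hay₀)
    (fun z hz y hy => by
      rw [Finset.mem_singleton] at hz; rw [hz]
      exact (le_max_right g a).trans_lt (hYt y hy).1)
    hemb.1 himg
  have hha : h a = a := hmin a (Finset.mem_singleton_self a)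
    (fun x hx => by rw [Finset.mem_singleton] at hx; rw [hx])
  have hδmem : δ ∈ Yt := by rw [hYtδ]; exact Finset.mem_singleton_self δ
  have hamem : a ∈ (↑(({a} : Finset Ordinal) ∪ ({y₀} : Finset Ordinal)) : Set Ordinal) := by simp
  have hymem : y₀ ∈ (↑(({a} : Finset Ordinal) ∪ ({y₀} : Finset Ordinal)) : Set Ordinal) := by
    simp
  have h2 : le2 a δ := by
    have h3 := (hpres a hamem y₀ hymem).2 hay₀2
    rwa [hha, hhy₀] at h3
  refine ⟨δ, (le_max_left g a).trans_lt (hYt δ hδmem).1, (hYt δ hδmem).2, h2, ?_⟩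
  exact ne_of_lt ((le_max_right g a).trans_lt (hYt δ hδmem).1)

end Helpers4
theorem lt2_structure
    (ρ : Ordinal) (hρ : AddIndec ρ)
    (le1 le2 : Ordinal → Ordinal → Prop) (hsys : R2System ρ le1 le2)
    :
    (∀ α β : Ordinal, le2 α β → α ≠ β →
      (∃ l : Ordinal, β = ρ * l ∧ Order.IsSuccLimit l) ∧
      (∀ γ' < α, ∃ γ, γ' < γ ∧ γ < α ∧ le1 γ α)) ∧
    (∀ α β γ : Ordinal, le2 α β → α ≠ β → le2 β γ → β ≠ γ →
      ∀ γ' < γ, ∃ δ, γ' < δ ∧ δ < γ ∧ le2 α δ ∧ α ≠ δ) := by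
  obtain ⟨hρ0, -⟩ := hρ
  constructor
  · intro a b hab hne
    constructor
    · obtain ⟨hbm, hbl⟩ := tgt_facts hsys hρ0 hab hne
      exact ⟨b / ρ, (self_div hbm).symm, hbl⟩
    · exact part1b hsys hρ0 hab hne
  · intro a b c hab hne1 hbc hne2
    exact part2 hsys hρ0 hab hne1 hbc hne2
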